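/- Let f be a ternary cubic with real coefficients and suppose c ∈ ℝ satisfies (1/2)·Σ_{p,q=1}^{3} B_{pq}·∂²B_{ij}/∂x_p∂x_q = c·x_i·x_j for all i, j. Let x ∈ ℝ³ be a point at which H(x) ≠ 0, and set g_{ij} = −f_{ij}(x)/6, h = det(g_{ij}), let (g^{pq}) be the inverse matrix of (g_{ij}), and define R_{ijkl} = −(1/144)·Σ_{p,q=1}^{3} g^{pq}·(f_{jlp} f_{ikq} − f_{ilp} f_{jkq}). Then for all vectors λ = (λ₁,λ₂,λ₃) and μ = (μ₁,μ₂,μ₃) in ℝ³: −4h·Σ_{i,j,k,l=1}^{3} λ_i μ_j λ_k μ_l R_{ijkl} = 6^{−4}·c·(λ₁μ₂x₃ + λ₂μ₃x₁ + λ₃μ₁x₂ − λ₂μ₁x₃ − λ₃μ₂x₁ − λ₁μ₃x₂)². -/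

import Mathlib

open MvPolynomial

noncomputable section

/-- The Hessian matrix of second partial derivatives of `f`. -/
def hessian (f : MvPolynomial (Fin 3) ℝ) : Matrix (Fin 3) (Fin 3) (MvPolynomial (Fin 3) ℝ) :=
  fun i j => pderiv i (pderiv j f)

/-- The adjugate (cofactor) matrix of the Hessian matrix of `f`. -/
def Bmat (f : MvPolynomial (Fin 3) ℝ) : Matrix (Fin 3) (Fin 3) (MvPolynomial (Fin 3) ℝ) :=
  (hessian f).adjugate

/-- The matrix `g_{ij} = -f_{ij}(x)/6` of the Hessian pseudo-Riemannian metric at `x`. -/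
def gmat (f : MvPolynomial (Fin 3) ℝ) (x : Fin 3 → ℝ) : Matrix (Fin 3) (Fin 3) ℝ :=
  fun i j => -(eval x (pderiv i (pderiv j f))) / 6

/-- The (constant) third partial derivatives `f_{ijk}` of `f`. -/
def thirdPartial (f : MvPolynomial (Fin 3) ℝ) (x : Fin 3 → ℝ) (i j k : Fin 3) : ℝ :=
  eval x (pderiv i (pderiv j (pderiv k f)))

/-- The components `R_{ijkl}` of the curvature tensor of the Hessian metric (Totaro's
formula): `R_{ijkl} = -(1/144) ∑_{p,q} g^{pq} (f_{jlp} f_{ikq} - f_{ilp} f_{jkq})`. -/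
def curv (f : MvPolynomial (Fin 3) ℝ) (x : Fin 3 → ℝ) (i j k l : Fin 3) : ℝ :=
  -(1/144) * ∑ p : Fin 3, ∑ q : Fin 3,
    (gmat f x)⁻¹ p q *
      (thirdPartial f x j l p * thirdPartial f x i k q -
        thirdPartial f x i l p * thirdPartial f x j k q)

/- ---------------- auxiliary lemmas ---------------- -/

lemma pderiv_isHomog {σ : Type} [Fintype σ] [DecidableEq σ] {p : MvPolynomial σ ℝ} {n : ℕ}
    (hp : p.IsHomogeneous (n+1)) (i : σ) : (pderiv i p).IsHomogeneous n := by
  rw [p.as_sum, map_sum]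
  apply IsHomogeneous.sum
  intro d hd
  rw [pderiv_monomial]
  by_cases h : d i = 0
  · simp [h, isHomogeneous_zero]
  · apply isHomogeneous_monomial
    have hdeg : d.degree = n + 1 := by
      have := hp (mem_support_iff.mp hd)
      rw [Finsupp.degree_eq_weight_one]; exact this
    have hle : Finsupp.single i 1 ≤ d := by
      rw [Finsupp.single_le_iff]
      omega
    have heq : (d - Finsupp.single i 1) + Finsupp.single i 1 = d := tsub_add_cancel_of_le hle
    have h2 : (d - Finsupp.single i 1).degree + (Finsupp.single i (1:ℕ)).degree = n + 1 := by
      have := congrArg Finsupp.degree heq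
      simp only [Finsupp.degree_eq_weight_one] at hdeg this ⊢
      rw [map_add] at this
      rw [hdeg] at this
      exact this
    have h3 : (Finsupp.single i (1:ℕ)).degree = 1 := by
      exact Finsupp.degree_single i 1
    omega

lemma pderiv_comm' {σ : Type} [Fintype σ] [DecidableEq σ] (i j : σ) (p : MvPolynomial σ ℝ) :
    pderiv i (pderiv j p) = pderiv j (pderiv i p) := by
  rcases eq_or_ne i j with rfl | hij
  · rfl
  rw [p.as_sum, map_sum, map_sum, map_sum, map_sum]
  apply Finset.sum_congr rfl
  intro d _
  simp only [pderiv_monomial]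
  rw [tsub_tsub, tsub_tsub, add_comm (Finsupp.single j 1)]
  congr 1
  rw [Finsupp.tsub_apply, Finsupp.tsub_apply, Finsupp.single_apply, Finsupp.single_apply,
    if_neg hij, if_neg (Ne.symm hij)]
  simp [mul_assoc, mul_comm (↑(d j) : ℝ)]

lemma pderiv_of_isHomog_zero {σ : Type} [Fintype σ] [DecidableEq σ] {p : MvPolynomial σ ℝ}
    (hp : p.IsHomogeneous 0) (i : σ) : pderiv i p = 0 := by
  apply pderiv_eq_zero_of_notMem_vars
  intro hmem
  obtain ⟨d, hd, hid⟩ := mem_vars i |>.mp hmem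
  have h0 : Finsupp.weight 1 d = 0 := hp (mem_support_iff.mp hd)
  change Finsupp.weight (fun _ => 1) d = 0 at h0
  rw [← Finsupp.degree_eq_weight_one, Finsupp.degree_eq_zero_iff] at h0
  simp [h0] at hid

set_option maxHeartbeats 1000000 in
lemma quad_factor (G : Fin 3 → Fin 3 → ℝ) (t : Fin 3 → Fin 3 → Fin 3 → ℝ) (lam mu : Fin 3 → ℝ) :
    (∑ i : Fin 3, ∑ j : Fin 3, ∑ k : Fin 3, ∑ l : Fin 3,
      lam i * mu j * lam k * mu l *
        (-(1/144) * ∑ p : Fin 3, ∑ q : Fin 3,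
          G p q * (t j l p * t i k q - t i l p * t j k q))) =
    -(1/144) * ∑ p : Fin 3, ∑ q : Fin 3, G p q *
      ((∑ a : Fin 3, ∑ b : Fin 3, mu a * mu b * t a b p) *
       (∑ a : Fin 3, ∑ b : Fin 3, lam a * lam b * t a b q) -
       (∑ a : Fin 3, ∑ b : Fin 3, lam a * mu b * t a b p) *
       (∑ a : Fin 3, ∑ b : Fin 3, mu a * lam b * t a b q)) := by
  simp only [Fin.sum_univ_three]
  ring

set_option maxHeartbeats 1000000 in
lemma idA (f : MvPolynomial (Fin 3) ℝ) (lam mu : Fin 3 → ℝ) (w : Fin 3 → ℝ)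
    (hw0 : w 0 = lam 1 * mu 2 - lam 2 * mu 1)
    (hw1 : w 1 = lam 2 * mu 0 - lam 0 * mu 2)
    (hw2 : w 2 = lam 0 * mu 1 - lam 1 * mu 0) :
    (∑ i : Fin 3, ∑ j : Fin 3, C (w i * w j) * Bmat f i j) =
      (∑ a : Fin 3, ∑ b : Fin 3, C (lam a * lam b) * hessian f a b) *
      (∑ a : Fin 3, ∑ b : Fin 3, C (mu a * mu b) * hessian f a b) -
      (∑ a : Fin 3, ∑ b : Fin 3, C (lam a * mu b) * hessian f a b) *
      (∑ a : Fin 3, ∑ b : Fin 3, C (lam a * mu b) * hessian f a b) := by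
  have h10 : hessian f 1 0 = hessian f 0 1 := pderiv_comm' 1 0 f
  have h20 : hessian f 2 0 = hessian f 0 2 := pderiv_comm' 2 0 f
  have h21 : hessian f 2 1 = hessian f 1 2 := pderiv_comm' 2 1 f
  simp only [Bmat, Matrix.adjugate_fin_three, Fin.sum_univ_three, hw0, hw1, hw2,
    Matrix.cons_val', Matrix.of_apply, Matrix.cons_val_zero, Matrix.cons_val_one,
    Matrix.head_cons, Matrix.empty_val', Matrix.cons_val_fin_one, Matrix.head_fin_const,
    Matrix.cons_val_two, Matrix.tail_cons, map_sub, map_mul, h10, h20, h21]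
  ring

set_option maxHeartbeats 1000000 in
lemma idB (f : MvPolynomial (Fin 3) ℝ) (hf : f.IsHomogeneous 3) (x : Fin 3 → ℝ)
    (lam mu : Fin 3 → ℝ) (w : Fin 3 → ℝ)
    (hw0 : w 0 = lam 1 * mu 2 - lam 2 * mu 1)
    (hw1 : w 1 = lam 2 * mu 0 - lam 0 * mu 2)
    (hw2 : w 2 = lam 0 * mu 1 - lam 1 * mu 0) (p q : Fin 3) :
    (∑ i : Fin 3, ∑ j : Fin 3, (w i * w j) * eval x (pderiv p (pderiv q (Bmat f i j)))) =
      (∑ a : Fin 3, ∑ b : Fin 3, lam a * lam b * thirdPartial f x p a b) *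
        (∑ a : Fin 3, ∑ b : Fin 3, mu a * mu b * thirdPartial f x q a b) +
      (∑ a : Fin 3, ∑ b : Fin 3, lam a * lam b * thirdPartial f x q a b) *
        (∑ a : Fin 3, ∑ b : Fin 3, mu a * mu b * thirdPartial f x p a b) -
      2 * (∑ a : Fin 3, ∑ b : Fin 3, lam a * mu b * thirdPartial f x p a b) *
        (∑ a : Fin 3, ∑ b : Fin 3, lam a * mu b * thirdPartial f x q a b) := by
  have h4 : ∀ p q a b : Fin 3, pderiv p (pderiv q (hessian f a b)) = 0 := by
    intro p q a b
    have h0 : (pderiv q (hessian f a b)).IsHomogeneous 0 := by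
      simp only [hessian]
      exact pderiv_isHomog (pderiv_isHomog (pderiv_isHomog hf b) a) q
    exact pderiv_of_isHomog_zero h0 p
  have h := congrArg (fun z => eval x (pderiv p (pderiv q z))) (idA f lam mu w hw0 hw1 hw2)
  simp only [map_sum, pderiv_C_mul, pderiv_C, map_sub, pderiv_mul, map_add, map_mul, eval_C, h4,
    mul_zero, zero_mul, add_zero, zero_add, map_zero, Finset.sum_const_zero] at h
  simp only [thirdPartial, hessian] at *
  linear_combination h

lemma t_swap23 (f : MvPolynomial (Fin 3) ℝ) (x : Fin 3 → ℝ) (a b k : Fin 3) :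
    thirdPartial f x a b k = thirdPartial f x a k b := by
  simp only [thirdPartial]
  rw [pderiv_comm' b k f]

lemma t_cyc (f : MvPolynomial (Fin 3) ℝ) (x : Fin 3 → ℝ) (a b k : Fin 3) :
    thirdPartial f x a b k = thirdPartial f x k a b := by
  simp only [thirdPartial]
  rw [pderiv_comm' b k f, pderiv_comm' a k (pderiv b f)]

lemma conv_gen (f : MvPolynomial (Fin 3) ℝ) (x : Fin 3 → ℝ) (u v : Fin 3 → ℝ) (p : Fin 3) :
    (∑ a : Fin 3, ∑ b : Fin 3, u a * v b * thirdPartial f x a b p) =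
      ∑ a : Fin 3, ∑ b : Fin 3, u a * v b * thirdPartial f x p a b := by
  refine Finset.sum_congr rfl fun a _ => Finset.sum_congr rfl fun b _ => ?_
  rw [t_cyc]

lemma conv_swap (f : MvPolynomial (Fin 3) ℝ) (x : Fin 3 → ℝ) (lam mu : Fin 3 → ℝ) (q : Fin 3) :
    (∑ a : Fin 3, ∑ b : Fin 3, mu a * lam b * thirdPartial f x q a b) =
      ∑ a : Fin 3, ∑ b : Fin 3, lam a * mu b * thirdPartial f x q a b := by
  rw [Finset.sum_comm]
  refine Finset.sum_congr rfl fun a _ => Finset.sum_congr rfl fun b _ => ?_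
  rw [t_swap23 f x q b a]
  ring

lemma conv_ml (f : MvPolynomial (Fin 3) ℝ) (x : Fin 3 → ℝ) (lam mu : Fin 3 → ℝ) (q : Fin 3) :
    (∑ a : Fin 3, ∑ b : Fin 3, mu a * lam b * thirdPartial f x a b q) =
      ∑ a : Fin 3, ∑ b : Fin 3, lam a * mu b * thirdPartial f x q a b := by
  rw [conv_gen]
  rw [Finset.sum_comm]
  refine Finset.sum_congr rfl fun a _ => Finset.sum_congr rfl fun b _ => ?_
  rw [t_swap23 f x q b a]
  ring

set_option maxHeartbeats 2000000 in
lemma crucial (f : MvPolynomial (Fin 3) ℝ) (hf : f.IsHomogeneous 3) (c : ℝ)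
    (hc : ∀ i j : Fin 3,
      C (1/2 : ℝ) * ∑ p : Fin 3, ∑ q : Fin 3,
          Bmat f p q * pderiv p (pderiv q (Bmat f i j)) =
        C c * X i * X j)
    (x : Fin 3 → ℝ) (lam mu : Fin 3 → ℝ) (w : Fin 3 → ℝ)
    (hw0 : w 0 = lam 1 * mu 2 - lam 2 * mu 1)
    (hw1 : w 1 = lam 2 * mu 0 - lam 0 * mu 2)
    (hw2 : w 2 = lam 0 * mu 1 - lam 1 * mu 0) :
    (∑ p : Fin 3, ∑ q : Fin 3, eval x (Bmat f p q) *
      ((∑ a : Fin 3, ∑ b : Fin 3, mu a * mu b * thirdPartial f x p a b) *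
       (∑ a : Fin 3, ∑ b : Fin 3, lam a * lam b * thirdPartial f x q a b) -
       (∑ a : Fin 3, ∑ b : Fin 3, lam a * mu b * thirdPartial f x p a b) *
       (∑ a : Fin 3, ∑ b : Fin 3, lam a * mu b * thirdPartial f x q a b))) =
      c * (∑ i : Fin 3, w i * x i)^2 := by
  have hBsym : ∀ p q : Fin 3, eval x (Bmat f p q) = eval x (Bmat f q p) := by
    intro p q
    have htr : Matrix.transpose (hessian f) = hessian f := by
      funext a b
      show hessian f b a = hessian f a b
      exact pderiv_comm' b a f
    have hB : Bmat f p q = Bmat f q p := by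
      simp only [Bmat]
      calc (hessian f).adjugate p q
          = Matrix.transpose ((hessian f).adjugate) q p := rfl
        _ = (Matrix.transpose (hessian f)).adjugate q p := by
              rw [Matrix.adjugate_transpose]
        _ = (hessian f).adjugate q p := by rw [htr]
    rw [hB]
  have hB10 := hBsym 1 0
  have hB20 := hBsym 2 0
  have hB21 := hBsym 2 1
  have E1 : ∀ i j : Fin 3,
      (1/2 : ℝ) * ∑ p : Fin 3, ∑ q : Fin 3,
        eval x (Bmat f p q) * eval x (pderiv p (pderiv q (Bmat f i j))) =
      c * x i * x j := by
    intro i j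
    have := congrArg (eval x) (hc i j)
    simpa only [map_mul, map_sum, eval_C, eval_X] using this
  have E2 := fun p q => idB f hf x lam mu w hw0 hw1 hw2 p q
  have E100 := E1 0 0; have E101 := E1 0 1; have E102 := E1 0 2
  have E110 := E1 1 0; have E111 := E1 1 1; have E112 := E1 1 2
  have E120 := E1 2 0; have E121 := E1 2 1; have E122 := E1 2 2
  have E200 := E2 0 0; have E201 := E2 0 1; have E202 := E2 0 2
  have E210 := E2 1 0; have E211 := E2 1 1; have E212 := E2 1 2
  have E220 := E2 2 0; have E221 := E2 2 1; have E222 := E2 2 2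
  clear E1 E2 hc
  simp only [Fin.sum_univ_three] at E100 E101 E102 E110 E111 E112 E120 E121 E122 E200 E201 E202 E210 E211 E212 E220 E221 E222 ⊢
  rw [hB10, hB20, hB21] at E100 E101 E102 E110 E111 E112 E120 E121 E122 ⊢
  linear_combination
    (w 0 * w 0) * E100 + (w 0 * w 1) * E101 + (w 0 * w 2) * E102 +
    (w 1 * w 0) * E110 + (w 1 * w 1) * E111 + (w 1 * w 2) * E112 +
    (w 2 * w 0) * E120 + (w 2 * w 1) * E121 + (w 2 * w 2) * E122 -
    (1/2) * eval x (Bmat f 0 0) * E200 - (1/2) * eval x (Bmat f 0 1) * E201 -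
    (1/2) * eval x (Bmat f 0 2) * E202 - (1/2) * eval x (Bmat f 0 1) * E210 -
    (1/2) * eval x (Bmat f 1 1) * E211 - (1/2) * eval x (Bmat f 1 2) * E212 -
    (1/2) * eval x (Bmat f 0 2) * E220 - (1/2) * eval x (Bmat f 1 2) * E221 -
    (1/2) * eval x (Bmat f 2 2) * E222
lemma gmat_eq (f : MvPolynomial (Fin 3) ℝ) (x : Fin 3 → ℝ) :
    gmat f x = ((-1 : ℝ)/6) • (hessian f).map (eval x) := by
  funext i j
  show -(eval x (pderiv i (pderiv j f))) / 6 = ((-1:ℝ)/6) * eval x (hessian f i j)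
  simp only [hessian]
  ring

lemma gdet (f : MvPolynomial (Fin 3) ℝ) (x : Fin 3 → ℝ) :
    (gmat f x).det = -(eval x ((hessian f).det)) / 216 := by
  rw [gmat_eq, Matrix.det_smul, RingHom.map_det]
  norm_num
  ring

lemma ginv (f : MvPolynomial (Fin 3) ℝ) (x : Fin 3 → ℝ)
    (hx : eval x (hessian f).det ≠ 0) (p q : Fin 3) :
    (gmat f x)⁻¹ p q = -6 * eval x (Bmat f p q) / eval x ((hessian f).det) := by
  have hadj : (gmat f x).adjugate = ((1:ℝ)/36) • (Bmat f).map (eval x) := by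
    rw [gmat_eq, Matrix.adjugate_smul]
    have : ((hessian f).map (eval x)).adjugate = (Bmat f).map (eval x) := by
      rw [Bmat, ← RingHom.mapMatrix_apply, ← RingHom.mapMatrix_apply, RingHom.map_adjugate]
    rw [this]
    norm_num
  rw [Matrix.inv_def, hadj, gdet]
  rw [Ring.inverse_eq_inv]
  show (-(eval x (hessian f).det) / 216)⁻¹ * (((1:ℝ)/36) * eval x (Bmat f p q)) = _
  field_simp
  ring

set_option maxHeartbeats 1000000 in
lemma final_alg (H : ℝ) (hH : H ≠ 0) (Bv X : Fin 3 → Fin 3 → ℝ) (Y : ℝ)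
    (hsum : (∑ p : Fin 3, ∑ q : Fin 3, Bv p q * X p q) = Y) :
    -4 * (-H/216) * (-(1/144) * ∑ p : Fin 3, ∑ q : Fin 3,
        (-6 * Bv p q / H) * X p q) = (1/1296) * Y := by
  subst hsum
  simp only [Fin.sum_univ_three]
  field_simp
  ring

set_option maxHeartbeats 4000000 in
/-- If `(1/2) ∑_{p,q} B_{pq} ∂²B_{ij}/∂x_p∂x_q = c x_i x_j` for all `i, j`, and `x` is a
point where the Hessian determinant does not vanish, then for all vectors `λ, μ ∈ ℝ³`,
`-4h R(ξ,η,ξ,η) = 6⁻⁴ c (λ₁μ₂x₃ + λ₂μ₃x₁ + λ₃μ₁x₂ - λ₂μ₁x₃ - λ₃μ₂x₁ - λ₁μ₃x₂)²`. -/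
theorem stmt4 (f : MvPolynomial (Fin 3) ℝ) (hf : f.IsHomogeneous 3) (c : ℝ)
    (hc : ∀ i j : Fin 3,
      C (1/2 : ℝ) * ∑ p : Fin 3, ∑ q : Fin 3,
          Bmat f p q * pderiv p (pderiv q (Bmat f i j)) =
        C c * X i * X j)
    (x : Fin 3 → ℝ) (hx : eval x (hessian f).det ≠ 0)
    (lam mu : Fin 3 → ℝ) :
    -4 * (gmat f x).det *
        (∑ i : Fin 3, ∑ j : Fin 3, ∑ k : Fin 3, ∑ l : Fin 3,
          lam i * mu j * lam k * mu l * curv f x i j k l) =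
      ((6 : ℝ) ^ 4)⁻¹ * c *
        (lam 0 * mu 1 * x 2 + lam 1 * mu 2 * x 0 + lam 2 * mu 0 * x 1 -
          lam 1 * mu 0 * x 2 - lam 2 * mu 1 * x 0 - lam 0 * mu 2 * x 1) ^ 2 := by
  obtain ⟨w, hw0, hw1, hw2⟩ :
      ∃ w : Fin 3 → ℝ, w 0 = lam 1 * mu 2 - lam 2 * mu 1 ∧
        w 1 = lam 2 * mu 0 - lam 0 * mu 2 ∧ w 2 = lam 0 * mu 1 - lam 1 * mu 0 :=
    ⟨![lam 1 * mu 2 - lam 2 * mu 1, lam 2 * mu 0 - lam 0 * mu 2,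
       lam 0 * mu 1 - lam 1 * mu 0], rfl, rfl, rfl⟩
  have hcr := crucial f hf c hc x lam mu w hw0 hw1 hw2
  simp only [curv]
  refine Eq.trans (congrArg (fun s => -4 * (gmat f x).det * s)
    (quad_factor (fun p q => (gmat f x)⁻¹ p q) (thirdPartial f x) lam mu)) ?_
  simp only [conv_gen f x, conv_swap f x lam mu]
  simp only [ginv f x hx]
  rw [gdet]
  refine (final_alg (eval x ((hessian f).det)) hx
      (fun p q => eval x (Bmat f p q))
      (fun p q =>
        (∑ a : Fin 3, ∑ b : Fin 3, mu a * mu b * thirdPartial f x p a b) *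
          (∑ a : Fin 3, ∑ b : Fin 3, lam a * lam b * thirdPartial f x q a b) -
        (∑ a : Fin 3, ∑ b : Fin 3, lam a * mu b * thirdPartial f x p a b) *
          (∑ a : Fin 3, ∑ b : Fin 3, lam a * mu b * thirdPartial f x q a b))
      (c * (∑ i : Fin 3, w i * x i)^2) hcr).trans ?_
  simp only [Fin.sum_univ_three]
  rw [hw0, hw1, hw2]
  ring
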